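/- Inner Pasch holds in planes over ordered fields: let K be a linearly ordered field and V a K-vector space. If Sbtw K a p c, Sbtw K b q c, and a, b, c are not collinear over K, then there exists x with Sbtw K p x b and Sbtw K a x q. -/

import Mathlib

open AffineMap Set

/-- Inner Pasch holds in planes over ordered fields. -/
theorem inner_pasch {K : Type*} [Field K] [LinearOrder K] [IsStrictOrderedRing K] {V : Type*} [AddCommGroup V]
    [Module K V] {a b c p q : V}
    (hp : Sbtw K a p c) (hq : Sbtw K b q c)
    (hnc : ¬ Collinear K ({a, b, c} : Set V)) :
    ∃ x : V, Sbtw K p x b ∧ Sbtw K a x q := by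
  obtain ⟨s, hs, hps⟩ := hp.mem_image_Ioo
  obtain ⟨t, ht, hqt⟩ := hq.mem_image_Ioo
  have hD : (0:K) < t + s - s * t := by nlinarith [hs.1, hs.2, ht.1, ht.2]
  set D := t + s - s * t with hDdef
  have hDne : D ≠ 0 := ne_of_gt hD
  have hu : s * (1 - t) / D ∈ Set.Ioo (0:K) 1 := by
    refine ⟨div_pos (by nlinarith [hs.1, ht.2]) hD, ?_⟩
    rw [div_lt_one hD]; nlinarith [ht.1]
  have hv : s / D ∈ Set.Ioo (0:K) 1 := by
    refine ⟨div_pos hs.1 hD, ?_⟩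
    rw [div_lt_one hD]; nlinarith [ht.1, hs.2]
  have hpb : p ≠ b := by
    intro h
    apply hnc
    have := hp.wbtw.collinear  -- Collinear {a, p, c}
    rwa [h] at this
  have haq : a ≠ q := by
    intro h
    apply hnc
    have := hq.wbtw.collinear  -- Collinear {b, q, c}
    rw [← h] at this
    rwa [Set.insert_comm] at this
  refine ⟨lineMap p b (s * (1 - t) / D), ?_, ?_⟩
  · exact sbtw_lineMap_iff.2 ⟨hpb, hu⟩
  · have hkey : lineMap p b (s * (1 - t) / D) = lineMap a q (s / D) := by
      subst hps hqt
      simp only [lineMap_apply_module]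
      match_scalars <;> field_simp <;> ring
    rw [hkey]
    exact sbtw_lineMap_iff.2 ⟨haq, hv⟩
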